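/- Let K ≥ 2 and δ₁,…,δ_{K−1} > 0 with Σδᵢ ≤ 1, and let A be the K×K symmetric matrix with A(i,i) = 1 and A(i,j) = 1 − Σ_{k=min(i,j)}^{max(i,j)−1} δ_k for i ≠ j. Then A is positive definite. -/

import Mathlib

open Matrix

/-- Gram matrix of time-shifted pulses: for consecutive normalized delay differences
`δ₁,…,δ_{K−1} > 0` with `Σ δᵢ ≤ 1`, the matrix with `A(i,i) = 1` and
`A(i,j) = 1 − Σ_{k=min(i,j)}^{max(i,j)−1} δ_k` for `i ≠ j` is positive definite. -/
theorem delayGram_posDef (K : ℕ) (hK : 2 ≤ K) (δ : ℕ → ℝ)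
    (hδ : ∀ k < K - 1, 0 < δ k)
    (hsum : ∑ k ∈ Finset.range (K - 1), δ k ≤ 1) :
    (Matrix.of fun i j : Fin K =>
        1 - ∑ k ∈ Finset.Ico (min (i : ℕ) (j : ℕ)) (max (i : ℕ) (j : ℕ)), δ k).PosDef := by
  classical
  set r : ℝ := 1 - ∑ k ∈ Finset.range (K - 1), δ k with hrdef
  have hr0 : 0 ≤ r := by simp only [hrdef]; linarith
  -- entry decomposition
  have entry : ∀ i j : Fin K,
      (1 : ℝ) - ∑ k ∈ Finset.Ico (min (i : ℕ) (j : ℕ)) (max (i : ℕ) (j : ℕ)), δ k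
      = r + ∑ k ∈ Finset.range (K - 1), δ k *
          ((if (k : ℕ) < (i : ℕ) then (1:ℝ) else 0) * (if (k : ℕ) < (j : ℕ) then 1 else 0)
            + (if (i : ℕ) ≤ k then (1:ℝ) else 0) * (if (j : ℕ) ≤ k then 1 else 0)) := by
    intro i j
    have hsub : Finset.Ico (min (i : ℕ) (j : ℕ)) (max (i : ℕ) (j : ℕ)) ⊆
        Finset.range (K - 1) := by
      intro k hk
      simp only [Finset.mem_Ico] at hk
      simp only [Finset.mem_range]
      have h1 : max (i : ℕ) (j : ℕ) ≤ K - 1 := by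
        have hi : (i : ℕ) ≤ K - 1 := Nat.le_sub_one_of_lt i.isLt
        have hj : (j : ℕ) ≤ K - 1 := Nat.le_sub_one_of_lt j.isLt
        exact max_le hi hj
      omega
    have step : ∀ k ∈ Finset.range (K - 1),
        δ k * ((if (k : ℕ) < (i : ℕ) then (1:ℝ) else 0) * (if (k : ℕ) < (j : ℕ) then 1 else 0)
            + (if (i : ℕ) ≤ k then (1:ℝ) else 0) * (if (j : ℕ) ≤ k then 1 else 0))
        = δ k - (if k ∈ Finset.Ico (min (i : ℕ) (j : ℕ)) (max (i : ℕ) (j : ℕ)) then δ k else 0) := by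
      intro k _
      simp only [Finset.mem_Ico, le_min_iff, lt_max_iff, min_le_iff, max_le_iff]
      split_ifs <;> (try ring) <;> omega
    rw [Finset.sum_congr rfl step, Finset.sum_sub_distrib]
    have hinter : ∑ k ∈ Finset.range (K - 1),
        (if k ∈ Finset.Ico (min (i : ℕ) (j : ℕ)) (max (i : ℕ) (j : ℕ)) then δ k else 0)
        = ∑ k ∈ Finset.Ico (min (i : ℕ) (j : ℕ)) (max (i : ℕ) (j : ℕ)), δ k := by
      rw [Finset.sum_ite_mem, Finset.inter_eq_right.mpr hsub]
    rw [hinter, hrdef]; ring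
  rw [posDef_iff_dotProduct_mulVec]
  constructor
  · -- Hermitian (symmetric)
    ext i j
    simp only [conjTranspose_apply, Matrix.of_apply, star_trivial, min_comm (j:ℕ) (i:ℕ),
      max_comm (j:ℕ) (i:ℕ)]
  · intro x hx
    -- compute the quadratic form
    have qform : star x ⬝ᵥ ((Matrix.of fun i j : Fin K =>
        1 - ∑ k ∈ Finset.Ico (min (i : ℕ) (j : ℕ)) (max (i : ℕ) (j : ℕ)), δ k) *ᵥ x)
        = r * (∑ i : Fin K, x i) ^ 2 + ∑ k ∈ Finset.range (K - 1), δ k *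
            ((∑ i : Fin K, if (k : ℕ) < (i : ℕ) then x i else 0) ^ 2
              + (∑ i : Fin K, if (i : ℕ) ≤ k then x i else 0) ^ 2) := by
      simp only [dotProduct, mulVec, Matrix.of_apply, Pi.star_apply, star_trivial]
      calc ∑ i : Fin K, x i * ∑ j : Fin K, (1 - ∑ k ∈ Finset.Ico (min (i : ℕ) (j : ℕ)) (max (i : ℕ) (j : ℕ)), δ k) * x j
          = ∑ i : Fin K, ∑ j : Fin K, x i * ((r + ∑ k ∈ Finset.range (K - 1), δ k *
              ((if (k : ℕ) < (i : ℕ) then (1:ℝ) else 0) * (if (k : ℕ) < (j : ℕ) then 1 else 0)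
                + (if (i : ℕ) ≤ k then (1:ℝ) else 0) * (if (j : ℕ) ≤ k then 1 else 0))) * x j) := by
            refine Finset.sum_congr rfl fun i _ => ?_
            rw [Finset.mul_sum]
            refine Finset.sum_congr rfl fun j _ => ?_
            rw [entry i j]
        _ = ∑ i : Fin K, ∑ j : Fin K, (x i * r * x j + ∑ k ∈ Finset.range (K - 1),
              ((if (k : ℕ) < (i : ℕ) then x i else 0) * (if (k : ℕ) < (j : ℕ) then x j else 0)
                + (if (i : ℕ) ≤ k then x i else 0) * (if (j : ℕ) ≤ k then x j else 0)) * δ k) := by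
            refine Finset.sum_congr rfl fun i _ => Finset.sum_congr rfl fun j _ => ?_
            rw [add_mul, mul_add, Finset.sum_mul, Finset.mul_sum]
            congr 1
            · ring
            · refine Finset.sum_congr rfl fun k _ => ?_
              split_ifs <;> ring
        _ = (∑ i : Fin K, ∑ j : Fin K, x i * r * x j) + ∑ i : Fin K, ∑ j : Fin K, ∑ k ∈ Finset.range (K - 1),
              ((if (k : ℕ) < (i : ℕ) then x i else 0) * (if (k : ℕ) < (j : ℕ) then x j else 0)
                + (if (i : ℕ) ≤ k then x i else 0) * (if (j : ℕ) ≤ k then x j else 0)) * δ k := by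
            rw [← Finset.sum_add_distrib]
            refine Finset.sum_congr rfl fun i _ => ?_
            rw [← Finset.sum_add_distrib]
        _ = r * (∑ i : Fin K, x i) ^ 2 + ∑ k ∈ Finset.range (K - 1), δ k *
              ((∑ i : Fin K, if (k : ℕ) < (i : ℕ) then x i else 0) ^ 2
                + (∑ i : Fin K, if (i : ℕ) ≤ k then x i else 0) ^ 2) := by
            congr 1
            · rw [sq, Finset.sum_mul_sum, Finset.mul_sum]
              refine Finset.sum_congr rfl fun i _ => ?_
              rw [Finset.mul_sum]
              refine Finset.sum_congr rfl fun j _ => ?_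
              ring
            · refine ((Finset.sum_congr rfl fun i _ => Finset.sum_comm).trans
                Finset.sum_comm).trans (Finset.sum_congr rfl fun k _ => ?_)
              rw [mul_add, sq, sq, Finset.sum_mul_sum, Finset.sum_mul_sum,
                Finset.mul_sum, Finset.mul_sum, ← Finset.sum_add_distrib]
              refine Finset.sum_congr rfl fun i _ => ?_
              rw [Finset.mul_sum, Finset.mul_sum, ← Finset.sum_add_distrib]
              refine Finset.sum_congr rfl fun j _ => ?_
              ring
    rw [qform]
    -- positivity
    have hterm : ∀ k ∈ Finset.range (K - 1), 0 ≤ δ k *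
        ((∑ i : Fin K, if (k : ℕ) < (i : ℕ) then x i else 0) ^ 2
          + (∑ i : Fin K, if (i : ℕ) ≤ k then x i else 0) ^ 2) := by
      intro k hk
      exact mul_nonneg (le_of_lt (hδ k (Finset.mem_range.mp hk)))
        (add_nonneg (sq_nonneg _) (sq_nonneg _))
    -- find least index with x j ≠ 0
    have hne : (Finset.univ.filter fun i : Fin K => x i ≠ 0).Nonempty := by
      by_contra h
      rw [Finset.not_nonempty_iff_eq_empty, Finset.filter_eq_empty_iff] at h
      apply hx
      funext i
      have := h (Finset.mem_univ i)
      simpa using this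
    obtain ⟨m, hm, hmin⟩ := Finset.exists_min_image _ (fun i : Fin K => (i : ℕ)) hne
    rw [Finset.mem_filter] at hm
    have hxm : x m ≠ 0 := hm.2
    have hzero : ∀ i : Fin K, (i : ℕ) < (m : ℕ) → x i = 0 := by
      intro i hi
      by_contra hxi
      have := hmin i (Finset.mem_filter.mpr ⟨Finset.mem_univ i, hxi⟩)
      omega
    have hsumpos : 0 < ∑ k ∈ Finset.range (K - 1), δ k *
        ((∑ i : Fin K, if (k : ℕ) < (i : ℕ) then x i else 0) ^ 2
          + (∑ i : Fin K, if (i : ℕ) ≤ k then x i else 0) ^ 2) := by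
      rcases lt_or_ge (m : ℕ) (K - 1) with hcase | hcase
      · refine Finset.sum_pos' hterm ⟨(m : ℕ), Finset.mem_range.mpr hcase, ?_⟩
        have h2 : (∑ i : Fin K, if (i : ℕ) ≤ (m : ℕ) then x i else 0) = x m := by
          rw [Finset.sum_eq_single m]
          · simp
          · intro i _ hne'
            rcases lt_or_ge (i : ℕ) (m : ℕ) with h | h
            · simp [hzero i h]
            · have : ¬ ((i : ℕ) ≤ (m : ℕ)) := by
                have : (i : ℕ) ≠ (m : ℕ) := fun he => hne' (Fin.ext he)
                omega
              simp [this]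
          · intro h; exact absurd (Finset.mem_univ m) h
        rw [h2]
        have h1 := hδ (m : ℕ) hcase
        have h3 : (0:ℝ) < (x m) ^ 2 := by positivity
        nlinarith [sq_nonneg (∑ i : Fin K, if ((m : ℕ) : ℕ) < (i : ℕ) then x i else 0)]
      · -- m = K - 1, use k = K - 2
        have hmK : (m : ℕ) = K - 1 := by have := m.isLt; omega
        refine Finset.sum_pos' hterm ⟨K - 2, Finset.mem_range.mpr (by omega), ?_⟩
        have h2 : (∑ i : Fin K, if (K - 2 : ℕ) < (i : ℕ) then x i else 0) = x m := by
          rw [Finset.sum_eq_single m]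
          · have : (K - 2 : ℕ) < (m : ℕ) := by omega
            simp [this]
          · intro i _ hne'
            have : ¬ ((K - 2 : ℕ) < (i : ℕ)) := by
              have hi := i.isLt
              have : (i : ℕ) ≠ (m : ℕ) := fun he => hne' (Fin.ext he)
              omega
            simp [this]
          · intro h; exact absurd (Finset.mem_univ m) h
        rw [h2]
        have h1 := hδ (K - 2) (by omega)
        have h3 : (0:ℝ) < (x m) ^ 2 := by positivity
        nlinarith [sq_nonneg (∑ i : Fin K, if (i : ℕ) ≤ (K - 2 : ℕ) then x i else 0)]
    have hfirst : 0 ≤ r * (∑ i : Fin K, x i) ^ 2 := mul_nonneg hr0 (sq_nonneg _)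
    linarith
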